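/- The invariant almost complex structure on 𝔪 = 𝔤/𝔥 is unique up to sign: if K is any linear endomorphism of 𝔪 with K² = −id and ρ(X) ∘ K = K ∘ ρ(X) for all X ∈ 𝔥, then K = J or K = −J. -/

import Mathlib

noncomputable section

/-- The underlying space of the 9-dimensional Lie algebra `𝔤`; coordinates are taken
with respect to the ordered basis `z, b, x₁, x₂, x₃, x₄, h, e, f`
(so index 0 = z, 1 = b, 2 = x₁, 3 = x₂, 4 = x₃, 5 = x₄, 6 = h, 7 = e, 8 = f). -/
def G : Type := Fin 9 → ℝ

instance : AddCommGroup G := inferInstanceAs (AddCommGroup (Fin 9 → ℝ))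
instance : Module ℝ G := inferInstanceAs (Module ℝ (Fin 9 → ℝ))

@[simp] lemma G.add_apply (u v : G) (k : Fin 9) : (u + v) k = u k + v k := rfl
@[simp] lemma G.smul_apply (c : ℝ) (u : G) (k : Fin 9) : (c • u) k = c * u k := rfl
@[simp] lemma G.zero_apply (k : Fin 9) : (0 : G) k = 0 := rfl

/-- The Lie bracket of `𝔤` determined by `[b,xᵢ] = xᵢ`, `[b,z] = 2z`, `[h,x₁] = −3x₁`,
`[h,x₂] = −x₂`, `[h,x₃] = x₃`, `[h,x₄] = 3x₄`, `[f,x₂] = −3x₁`, `[f,x₃] = −2x₂`,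
`[f,x₄] = −x₃`, `[e,x₁] = x₂`, `[e,x₂] = 2x₃`, `[e,x₃] = 3x₄`, `[x₁,x₄] = z`,
`[x₂,x₃] = −3z`, `[h,f] = −2f`, `[h,e] = 2e`, `[f,e] = h`, all other brackets of
basis elements being zero. -/
def gb (u v : G) : G := fun k =>
  match k with
  | 0 => -2*(u 0*v 1 - u 1*v 0) + (u 2*v 5 - u 5*v 2) - 3*(u 3*v 4 - u 4*v 3)
  | 1 => 0
  | 2 => (u 1*v 2 - u 2*v 1) + 3*(u 2*v 6 - u 6*v 2) + 3*(u 3*v 8 - u 8*v 3)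
  | 3 => (u 1*v 3 - u 3*v 1) - (u 2*v 7 - u 7*v 2) + (u 3*v 6 - u 6*v 3) + 2*(u 4*v 8 - u 8*v 4)
  | 4 => (u 1*v 4 - u 4*v 1) - 2*(u 3*v 7 - u 7*v 3) - (u 4*v 6 - u 6*v 4) + (u 5*v 8 - u 8*v 5)
  | 5 => (u 1*v 5 - u 5*v 1) - 3*(u 4*v 7 - u 7*v 4) - 3*(u 5*v 6 - u 6*v 5)
  | 6 => -(u 7*v 8 - u 8*v 7)
  | 7 => 2*(u 6*v 7 - u 7*v 6)
  | 8 => -2*(u 6*v 8 - u 8*v 6)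

instance : LieRing G where
  bracket := gb
  add_lie := by intro x y z; funext k; fin_cases k <;> simp only [gb, G.add_apply] <;> ring
  lie_add := by intro x y z; funext k; fin_cases k <;> simp only [gb, G.add_apply] <;> ring
  lie_self := by intro x; funext k; fin_cases k <;> simp only [gb, G.zero_apply] <;> ring
  leibniz_lie := by intro x y z; funext k; fin_cases k <;> simp only [gb, G.add_apply] <;> ring

lemma G.lie_def (u v : G) : ⁅u, v⁆ = gb u v := rfl

instance : LieAlgebra ℝ G where
  lie_smul := by
    intro c x y; funext k
    rw [G.lie_def, G.lie_def]
    fin_cases k <;> simp only [gb, G.smul_apply] <;> ring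

/-- basis vector `z` -/ def zv : G := Pi.single 0 1
/-- basis vector `b` -/ def bv : G := Pi.single 1 1
/-- basis vector `x₁` -/ def x1v : G := Pi.single 2 1
/-- basis vector `x₂` -/ def x2v : G := Pi.single 3 1
/-- basis vector `x₃` -/ def x3v : G := Pi.single 4 1
/-- basis vector `x₄` -/ def x4v : G := Pi.single 5 1
/-- basis vector `h` -/ def hv : G := Pi.single 6 1
/-- basis vector `e` -/ def ev : G := Pi.single 7 1
/-- basis vector `f` -/ def fv : G := Pi.single 8 1


/-- The subalgebra `𝔥 = span{x₁, h − b, f − z}` (as a subspace of `𝔤`). -/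
def Hsub : Submodule ℝ G := Submodule.span ℝ {x1v, hv - bv, fv - zv}

/-- The quotient map `π : 𝔤 → 𝔪 = 𝔤/𝔥`. -/
def pr : G →ₗ[ℝ] G ⧸ Hsub := Hsub.mkQ

/-- The defining values of the invariant almost complex structure `J` on `𝔪 = 𝔤/𝔥`:
`J z̄ = x̄₂`, `J b̄ = −x̄₃`, `J ē = x̄₄`, `J x̄₂ = −z̄`, `J x̄₃ = b̄`, `J x̄₄ = −ē`. -/
def IsJ (J : Module.End ℝ (G ⧸ Hsub)) : Prop :=
  J (pr zv) = pr x2v ∧ J (pr bv) = -pr x3v ∧ J (pr ev) = pr x4v ∧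
  J (pr x2v) = -pr zv ∧ J (pr x3v) = pr bv ∧ J (pr x4v) = -pr ev

@[simp] lemma G.sub_apply (u v : G) (k : Fin 9) : (u - v) k = u k - v k := rfl
@[simp] lemma G.neg_apply (u : G) (k : Fin 9) : (-u) k = -u k := rfl
@[simp] lemma G.smul_apply' (c : ℝ) (u : Fin 9 → ℝ) (k : Fin 9) :
    (HSMul.hSMul (α := ℝ) (β := G) (γ := G) c u) k = c * u k := rfl
@[simp] lemma G.sub_apply' (u v : Fin 9 → ℝ) (k : Fin 9) :
    (HSub.hSub (α := G) (β := G) (γ := G) u v) k = u k - v k := rfl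
@[simp] lemma G.add_apply' (u v : Fin 9 → ℝ) (k : Fin 9) :
    (HAdd.hAdd (α := G) (β := G) (γ := G) u v) k = u k + v k := rfl
@[simp] lemma G.neg_apply' (u : Fin 9 → ℝ) (k : Fin 9) :
    (Neg.neg (α := G) u) k = -u k := rfl
lemma G.lie_apply (u v : G) (k : Fin 9) : ⁅u, v⁆ k = gb u v k := rfl

def phifun (u : G) : Fin 6 → ℝ
  | 0 => u 0 + u 8
  | 1 => u 1 + u 6
  | 2 => u 3
  | 3 => u 4
  | 4 => u 5
  | 5 => u 7

def phi : G →ₗ[ℝ] (Fin 6 → ℝ) where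
  toFun := phifun
  map_add' u v := by funext t; fin_cases t <;> simp [phifun] <;> ring
  map_smul' c u := by funext t; fin_cases t <;> simp [phifun] <;> ring

lemma x1v_mem : x1v ∈ Hsub := Submodule.subset_span (by simp)
lemma hb_mem : hv - bv ∈ Hsub := Submodule.subset_span (by simp)
lemma fz_mem : fv - zv ∈ Hsub := Submodule.subset_span (by simp)

lemma mem_Hsub (u : G) (h0 : u 0 + u 8 = 0) (h1 : u 1 + u 6 = 0) (h3 : u 3 = 0)
    (h4 : u 4 = 0) (h5 : u 5 = 0) (h7 : u 7 = 0) : u ∈ Hsub := by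
  have hu : u = u 2 • x1v + u 6 • (hv - bv) + u 8 • (fv - zv) := by
    funext k; fin_cases k <;>
      simp [x1v, hv, bv, fv, zv, Pi.single_apply] <;> linarith
  rw [hu]
  exact Submodule.add_mem _ (Submodule.add_mem _ (Submodule.smul_mem _ _ x1v_mem)
    (Submodule.smul_mem _ _ hb_mem)) (Submodule.smul_mem _ _ fz_mem)

def cmap : (G ⧸ Hsub) →ₗ[ℝ] (Fin 6 → ℝ) := Hsub.liftQ phi (by
  rw [Hsub, Submodule.span_le]
  rintro x hx
  simp only [Set.mem_insert_iff, Set.mem_singleton_iff] at hx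
  rcases hx with rfl | rfl | rfl <;>
    · rw [SetLike.mem_coe, LinearMap.mem_ker]
      funext t
      fin_cases t <;> simp [phi, phifun, x1v, hv, bv, fv, zv, Pi.single_apply])

@[simp] lemma cmap_pr (u : G) : cmap (pr u) = phifun u := rfl

lemma pr_eq (u : G) : pr u = (u 0 + u 8) • pr zv + (u 1 + u 6) • pr bv + u 3 • pr x2v
    + u 4 • pr x3v + u 5 • pr x4v + u 7 • pr ev := by
  have hmem : u - ((u 0 + u 8) • zv + (u 1 + u 6) • bv + u 3 • x2v + u 4 • x3v
      + u 5 • x4v + u 7 • ev) ∈ Hsub := by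
    refine mem_Hsub _ ?_ ?_ ?_ ?_ ?_ ?_ <;>
      simp [zv, bv, x2v, x3v, x4v, ev, Pi.single_apply] <;> ring
  have h := (Submodule.Quotient.eq Hsub).2 hmem
  simpa only [map_add, map_smul, Submodule.mkQ_apply, pr, Submodule.Quotient.mk_add,
    Submodule.Quotient.mk_smul] using h

lemma expand (v : G ⧸ Hsub) : v = cmap v 0 • pr zv + cmap v 1 • pr bv + cmap v 2 • pr x2v
    + cmap v 3 • pr x3v + cmap v 4 • pr x4v + cmap v 5 • pr ev := by
  obtain ⟨u, rfl⟩ := Hsub.mkQ_surjective v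
  show pr u = cmap (pr u) 0 • pr zv + cmap (pr u) 1 • pr bv + cmap (pr u) 2 • pr x2v
    + cmap (pr u) 3 • pr x3v + cmap (pr u) 4 • pr x4v + cmap (pr u) 5 • pr ev
  rw [cmap_pr]
  show pr u = (u 0 + u 8) • pr zv + (u 1 + u 6) • pr bv + u 3 • pr x2v
    + u 4 • pr x3v + u 5 • pr x4v + u 7 • pr ev
  exact pr_eq u

lemma ext6 {F₁ F₂ : Module.End ℝ (G ⧸ Hsub)} (h0 : F₁ (pr zv) = F₂ (pr zv))
    (h1 : F₁ (pr bv) = F₂ (pr bv)) (h2 : F₁ (pr x2v) = F₂ (pr x2v))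
    (h3 : F₁ (pr x3v) = F₂ (pr x3v)) (h4 : F₁ (pr x4v) = F₂ (pr x4v))
    (h5 : F₁ (pr ev) = F₂ (pr ev)) : F₁ = F₂ := by
  apply LinearMap.ext
  intro v
  conv_lhs => rw [expand v]
  conv_rhs => rw [expand v]
  simp only [map_add, map_smul, h0, h1, h2, h3, h4, h5]


lemma pr_combo (r0 r1 r2 r3 r4 r5 : ℝ) :
    pr (r0 • zv + r1 • bv + r2 • x2v + r3 • x3v + r4 • x4v + r5 • ev)
      = r0 • pr zv + r1 • pr bv + r2 • pr x2v + r3 • pr x3v + r4 • pr x4v + r5 • pr ev := by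
  simp

set_option maxHeartbeats 4000000 in
/-- The invariant almost complex structure on `𝔪 = 𝔤/𝔥` is unique up to
sign: if `K` is any linear endomorphism of `𝔪` with `K² = −id` commuting with the isotropy
representation (`ρ(X) ∘ K = K ∘ ρ(X)` for all `X ∈ 𝔥`), then `K = J` or `K = −J`. -/
theorem stmt7 (J : Module.End ℝ (G ⧸ Hsub)) (hJ : IsJ J)
    (K : Module.End ℝ (G ⧸ Hsub))
    (hK2 : K ∘ₗ K = -LinearMap.id)
    (hKinv : ∀ X ∈ Hsub, ∀ v w : G, K (pr v) = pr w → K (pr ⁅X, v⁆) = pr ⁅X, w⁆) :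
    K = J ∨ K = -J := by
  obtain ⟨hJ0, hJ1, hJ5, hJ2, hJ3, hJ4⟩ := hJ
  obtain ⟨A, hA0, hA1, hA2, hA3, hA4, hA5⟩ :
      ∃ A : Fin 6 → Fin 6 → ℝ,
        (∀ j, cmap (K (pr zv)) j = A 0 j) ∧ (∀ j, cmap (K (pr bv)) j = A 1 j) ∧
        (∀ j, cmap (K (pr x2v)) j = A 2 j) ∧ (∀ j, cmap (K (pr x3v)) j = A 3 j) ∧
        (∀ j, cmap (K (pr x4v)) j = A 4 j) ∧ (∀ j, cmap (K (pr ev)) j = A 5 j) :=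
    ⟨fun i => match i with
      | 0 => fun j => cmap (K (pr zv)) j
      | 1 => fun j => cmap (K (pr bv)) j
      | 2 => fun j => cmap (K (pr x2v)) j
      | 3 => fun j => cmap (K (pr x3v)) j
      | 4 => fun j => cmap (K (pr x4v)) j
      | 5 => fun j => cmap (K (pr ev)) j,
      fun _ => rfl, fun _ => rfl, fun _ => rfl, fun _ => rfl, fun _ => rfl, fun _ => rfl⟩
  have hKg0 : K (pr zv) = A 0 0 • pr zv + A 0 1 • pr bv + A 0 2 • pr x2v + A 0 3 • pr x3v + A 0 4 • pr x4v + A 0 5 • pr ev := by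
    simp only [← hA0]; exact expand _
  have hKg1 : K (pr bv) = A 1 0 • pr zv + A 1 1 • pr bv + A 1 2 • pr x2v + A 1 3 • pr x3v + A 1 4 • pr x4v + A 1 5 • pr ev := by
    simp only [← hA1]; exact expand _
  have hKg2 : K (pr x2v) = A 2 0 • pr zv + A 2 1 • pr bv + A 2 2 • pr x2v + A 2 3 • pr x3v + A 2 4 • pr x4v + A 2 5 • pr ev := by
    simp only [← hA2]; exact expand _
  have hKg3 : K (pr x3v) = A 3 0 • pr zv + A 3 1 • pr bv + A 3 2 • pr x2v + A 3 3 • pr x3v + A 3 4 • pr x4v + A 3 5 • pr ev := by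
    simp only [← hA3]; exact expand _
  have hKg4 : K (pr x4v) = A 4 0 • pr zv + A 4 1 • pr bv + A 4 2 • pr x2v + A 4 3 • pr x3v + A 4 4 • pr x4v + A 4 5 • pr ev := by
    simp only [← hA4]; exact expand _
  have hKg5 : K (pr ev) = A 5 0 • pr zv + A 5 1 • pr bv + A 5 2 • pr x2v + A 5 3 • pr x3v + A 5 4 • pr x4v + A 5 5 • pr ev := by
    simp only [← hA5]; exact expand _
  have hKc : ∀ (u : G) (t : Fin 6), cmap (K (pr u)) t
      = (u 0 + u 8) * A 0 t + (u 1 + u 6) * A 1 t + u 3 * A 2 t + u 4 * A 3 t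
        + u 5 * A 4 t + u 7 * A 5 t := by
    intro u t
    conv_lhs => rw [pr_eq u]
    simp only [map_add, map_smul, Pi.add_apply, Pi.smul_apply, smul_eq_mul,
      hA0, hA1, hA2, hA3, hA4, hA5]
  have eqn : ∀ X ∈ Hsub, ∀ (v : G) (r0 r1 r2 r3 r4 r5 : ℝ),
      K (pr v) = r0 • pr zv + r1 • pr bv + r2 • pr x2v + r3 • pr x3v + r4 • pr x4v + r5 • pr ev →
      ∀ t : Fin 6, (⁅X, v⁆ 0 + ⁅X, v⁆ 8) * A 0 t + (⁅X, v⁆ 1 + ⁅X, v⁆ 6) * A 1 t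
        + ⁅X, v⁆ 3 * A 2 t + ⁅X, v⁆ 4 * A 3 t + ⁅X, v⁆ 5 * A 4 t + ⁅X, v⁆ 7 * A 5 t
        = phifun ⁅X, r0 • zv + r1 • bv + r2 • x2v + r3 • x3v + r4 • x4v + r5 • ev⁆ t := by
    intro X hX v r0 r1 r2 r3 r4 r5 hv t
    have h := hKinv X hX v _ (by rw [hv]; exact (pr_combo r0 r1 r2 r3 r4 r5).symm)
    have h2 := congrFun (congrArg cmap h) t
    rw [hKc ⁅X, v⁆ t] at h2
    rw [cmap_pr] at h2
    exact h2
  have Z01 : A 0 1 = 0 := by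
    have E := eqn (hv - bv) hb_mem zv (A 0 0) (A 0 1) (A 0 2) (A 0 3) (A 0 4) (A 0 5) hKg0 1
    simp only [G.lie_apply, gb, phifun, G.add_apply, G.smul_apply, G.sub_apply, G.neg_apply, G.zero_apply] at E
    simp [G.lie_def, gb, phifun, zv, bv, x2v, x3v, x4v, ev, hv, fv, x1v, Pi.single_apply, G.add_apply, G.smul_apply, G.sub_apply, G.neg_apply, G.zero_apply] at E
    first
      | linarith
      | (rcases E with E | E <;> first | linarith | norm_num at E)
  have Z03 : A 0 3 = 0 := by
    have E := eqn (hv - bv) hb_mem zv (A 0 0) (A 0 1) (A 0 2) (A 0 3) (A 0 4) (A 0 5) hKg0 3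
    simp only [G.lie_apply, gb, phifun, G.add_apply, G.smul_apply, G.sub_apply, G.neg_apply, G.zero_apply] at E
    simp [G.lie_def, gb, phifun, zv, bv, x2v, x3v, x4v, ev, hv, fv, x1v, Pi.single_apply, G.add_apply, G.smul_apply, G.sub_apply, G.neg_apply, G.zero_apply] at E
    first
      | linarith
      | (rcases E with E | E <;> first | linarith | norm_num at E)
  have Z04 : A 0 4 = 0 := by
    have E := eqn (hv - bv) hb_mem zv (A 0 0) (A 0 1) (A 0 2) (A 0 3) (A 0 4) (A 0 5) hKg0 4
    simp only [G.lie_apply, gb, phifun, G.add_apply, G.smul_apply, G.sub_apply, G.neg_apply, G.zero_apply] at E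
    simp [G.lie_def, gb, phifun, zv, bv, x2v, x3v, x4v, ev, hv, fv, x1v, Pi.single_apply, G.add_apply, G.smul_apply, G.sub_apply, G.neg_apply, G.zero_apply] at E
    first
      | linarith
      | (rcases E with E | E <;> first | linarith | norm_num at E)
  have Z05 : A 0 5 = 0 := by
    have E := eqn (hv - bv) hb_mem zv (A 0 0) (A 0 1) (A 0 2) (A 0 3) (A 0 4) (A 0 5) hKg0 5
    simp only [G.lie_apply, gb, phifun, G.add_apply, G.smul_apply, G.sub_apply, G.neg_apply, G.zero_apply] at E
    simp [G.lie_def, gb, phifun, zv, bv, x2v, x3v, x4v, ev, hv, fv, x1v, Pi.single_apply, G.add_apply, G.smul_apply, G.sub_apply, G.neg_apply, G.zero_apply] at E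
    first
      | linarith
      | (rcases E with E | E <;> first | linarith | norm_num at E)
  have Z10 : A 1 0 = 0 := by
    have E := eqn (hv - bv) hb_mem bv (A 1 0) (A 1 1) (A 1 2) (A 1 3) (A 1 4) (A 1 5) hKg1 0
    simp only [G.lie_apply, gb, phifun, G.add_apply, G.smul_apply, G.sub_apply, G.neg_apply, G.zero_apply] at E
    simp [G.lie_def, gb, phifun, zv, bv, x2v, x3v, x4v, ev, hv, fv, x1v, Pi.single_apply, G.add_apply, G.smul_apply, G.sub_apply, G.neg_apply, G.zero_apply] at E
    first
      | linarith
      | (rcases E with E | E <;> first | linarith | norm_num at E)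
  have Z12 : A 1 2 = 0 := by
    have E := eqn (hv - bv) hb_mem bv (A 1 0) (A 1 1) (A 1 2) (A 1 3) (A 1 4) (A 1 5) hKg1 2
    simp only [G.lie_apply, gb, phifun, G.add_apply, G.smul_apply, G.sub_apply, G.neg_apply, G.zero_apply] at E
    simp [G.lie_def, gb, phifun, zv, bv, x2v, x3v, x4v, ev, hv, fv, x1v, Pi.single_apply, G.add_apply, G.smul_apply, G.sub_apply, G.neg_apply, G.zero_apply] at E
    first
      | linarith
      | (rcases E with E | E <;> first | linarith | norm_num at E)
  have Z14 : A 1 4 = 0 := by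
    have E := eqn (hv - bv) hb_mem bv (A 1 0) (A 1 1) (A 1 2) (A 1 3) (A 1 4) (A 1 5) hKg1 4
    simp only [G.lie_apply, gb, phifun, G.add_apply, G.smul_apply, G.sub_apply, G.neg_apply, G.zero_apply] at E
    simp [G.lie_def, gb, phifun, zv, bv, x2v, x3v, x4v, ev, hv, fv, x1v, Pi.single_apply, G.add_apply, G.smul_apply, G.sub_apply, G.neg_apply, G.zero_apply] at E
    first
      | linarith
      | (rcases E with E | E <;> first | linarith | norm_num at E)
  have Z15 : A 1 5 = 0 := by
    have E := eqn (hv - bv) hb_mem bv (A 1 0) (A 1 1) (A 1 2) (A 1 3) (A 1 4) (A 1 5) hKg1 5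
    simp only [G.lie_apply, gb, phifun, G.add_apply, G.smul_apply, G.sub_apply, G.neg_apply, G.zero_apply] at E
    simp [G.lie_def, gb, phifun, zv, bv, x2v, x3v, x4v, ev, hv, fv, x1v, Pi.single_apply, G.add_apply, G.smul_apply, G.sub_apply, G.neg_apply, G.zero_apply] at E
    first
      | linarith
      | (rcases E with E | E <;> first | linarith | norm_num at E)
  have Z21 : A 2 1 = 0 := by
    have E := eqn (hv - bv) hb_mem x2v (A 2 0) (A 2 1) (A 2 2) (A 2 3) (A 2 4) (A 2 5) hKg2 1
    simp only [G.lie_apply, gb, phifun, G.add_apply, G.smul_apply, G.sub_apply, G.neg_apply, G.zero_apply] at E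
    simp [G.lie_def, gb, phifun, zv, bv, x2v, x3v, x4v, ev, hv, fv, x1v, Pi.single_apply, G.add_apply, G.smul_apply, G.sub_apply, G.neg_apply, G.zero_apply] at E
    first
      | linarith
      | (rcases E with E | E <;> first | linarith | norm_num at E)
  have Z23 : A 2 3 = 0 := by
    have E := eqn (hv - bv) hb_mem x2v (A 2 0) (A 2 1) (A 2 2) (A 2 3) (A 2 4) (A 2 5) hKg2 3
    simp only [G.lie_apply, gb, phifun, G.add_apply, G.smul_apply, G.sub_apply, G.neg_apply, G.zero_apply] at E
    simp [G.lie_def, gb, phifun, zv, bv, x2v, x3v, x4v, ev, hv, fv, x1v, Pi.single_apply, G.add_apply, G.smul_apply, G.sub_apply, G.neg_apply, G.zero_apply] at E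
    first
      | linarith
      | (rcases E with E | E <;> first | linarith | norm_num at E)
  have Z24 : A 2 4 = 0 := by
    have E := eqn (hv - bv) hb_mem x2v (A 2 0) (A 2 1) (A 2 2) (A 2 3) (A 2 4) (A 2 5) hKg2 4
    simp only [G.lie_apply, gb, phifun, G.add_apply, G.smul_apply, G.sub_apply, G.neg_apply, G.zero_apply] at E
    simp [G.lie_def, gb, phifun, zv, bv, x2v, x3v, x4v, ev, hv, fv, x1v, Pi.single_apply, G.add_apply, G.smul_apply, G.sub_apply, G.neg_apply, G.zero_apply] at E
    first
      | linarith
      | (rcases E with E | E <;> first | linarith | norm_num at E)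
  have Z25 : A 2 5 = 0 := by
    have E := eqn (hv - bv) hb_mem x2v (A 2 0) (A 2 1) (A 2 2) (A 2 3) (A 2 4) (A 2 5) hKg2 5
    simp only [G.lie_apply, gb, phifun, G.add_apply, G.smul_apply, G.sub_apply, G.neg_apply, G.zero_apply] at E
    simp [G.lie_def, gb, phifun, zv, bv, x2v, x3v, x4v, ev, hv, fv, x1v, Pi.single_apply, G.add_apply, G.smul_apply, G.sub_apply, G.neg_apply, G.zero_apply] at E
    first
      | linarith
      | (rcases E with E | E <;> first | linarith | norm_num at E)
  have Z30 : A 3 0 = 0 := by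
    have E := eqn (hv - bv) hb_mem x3v (A 3 0) (A 3 1) (A 3 2) (A 3 3) (A 3 4) (A 3 5) hKg3 0
    simp only [G.lie_apply, gb, phifun, G.add_apply, G.smul_apply, G.sub_apply, G.neg_apply, G.zero_apply] at E
    simp [G.lie_def, gb, phifun, zv, bv, x2v, x3v, x4v, ev, hv, fv, x1v, Pi.single_apply, G.add_apply, G.smul_apply, G.sub_apply, G.neg_apply, G.zero_apply] at E
    first
      | linarith
      | (rcases E with E | E <;> first | linarith | norm_num at E)
  have Z32 : A 3 2 = 0 := by
    have E := eqn (hv - bv) hb_mem x3v (A 3 0) (A 3 1) (A 3 2) (A 3 3) (A 3 4) (A 3 5) hKg3 2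
    simp only [G.lie_apply, gb, phifun, G.add_apply, G.smul_apply, G.sub_apply, G.neg_apply, G.zero_apply] at E
    simp [G.lie_def, gb, phifun, zv, bv, x2v, x3v, x4v, ev, hv, fv, x1v, Pi.single_apply, G.add_apply, G.smul_apply, G.sub_apply, G.neg_apply, G.zero_apply] at E
    first
      | linarith
      | (rcases E with E | E <;> first | linarith | norm_num at E)
  have Z34 : A 3 4 = 0 := by
    have E := eqn (hv - bv) hb_mem x3v (A 3 0) (A 3 1) (A 3 2) (A 3 3) (A 3 4) (A 3 5) hKg3 4
    simp only [G.lie_apply, gb, phifun, G.add_apply, G.smul_apply, G.sub_apply, G.neg_apply, G.zero_apply] at E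
    simp [G.lie_def, gb, phifun, zv, bv, x2v, x3v, x4v, ev, hv, fv, x1v, Pi.single_apply, G.add_apply, G.smul_apply, G.sub_apply, G.neg_apply, G.zero_apply] at E
    first
      | linarith
      | (rcases E with E | E <;> first | linarith | norm_num at E)
  have Z35 : A 3 5 = 0 := by
    have E := eqn (hv - bv) hb_mem x3v (A 3 0) (A 3 1) (A 3 2) (A 3 3) (A 3 4) (A 3 5) hKg3 5
    simp only [G.lie_apply, gb, phifun, G.add_apply, G.smul_apply, G.sub_apply, G.neg_apply, G.zero_apply] at E
    simp [G.lie_def, gb, phifun, zv, bv, x2v, x3v, x4v, ev, hv, fv, x1v, Pi.single_apply, G.add_apply, G.smul_apply, G.sub_apply, G.neg_apply, G.zero_apply] at E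
    first
      | linarith
      | (rcases E with E | E <;> first | linarith | norm_num at E)
  have Z40 : A 4 0 = 0 := by
    have E := eqn (hv - bv) hb_mem x4v (A 4 0) (A 4 1) (A 4 2) (A 4 3) (A 4 4) (A 4 5) hKg4 0
    simp only [G.lie_apply, gb, phifun, G.add_apply, G.smul_apply, G.sub_apply, G.neg_apply, G.zero_apply] at E
    simp [G.lie_def, gb, phifun, zv, bv, x2v, x3v, x4v, ev, hv, fv, x1v, Pi.single_apply, G.add_apply, G.smul_apply, G.sub_apply, G.neg_apply, G.zero_apply] at E
    first
      | linarith
      | (rcases E with E | E <;> first | linarith | norm_num at E)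
  have Z41 : A 4 1 = 0 := by
    have E := eqn (hv - bv) hb_mem x4v (A 4 0) (A 4 1) (A 4 2) (A 4 3) (A 4 4) (A 4 5) hKg4 1
    simp only [G.lie_apply, gb, phifun, G.add_apply, G.smul_apply, G.sub_apply, G.neg_apply, G.zero_apply] at E
    simp [G.lie_def, gb, phifun, zv, bv, x2v, x3v, x4v, ev, hv, fv, x1v, Pi.single_apply, G.add_apply, G.smul_apply, G.sub_apply, G.neg_apply, G.zero_apply] at E
    first
      | linarith
      | (rcases E with E | E <;> first | linarith | norm_num at E)
  have Z42 : A 4 2 = 0 := by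
    have E := eqn (hv - bv) hb_mem x4v (A 4 0) (A 4 1) (A 4 2) (A 4 3) (A 4 4) (A 4 5) hKg4 2
    simp only [G.lie_apply, gb, phifun, G.add_apply, G.smul_apply, G.sub_apply, G.neg_apply, G.zero_apply] at E
    simp [G.lie_def, gb, phifun, zv, bv, x2v, x3v, x4v, ev, hv, fv, x1v, Pi.single_apply, G.add_apply, G.smul_apply, G.sub_apply, G.neg_apply, G.zero_apply] at E
    first
      | linarith
      | (rcases E with E | E <;> first | linarith | norm_num at E)
  have Z43 : A 4 3 = 0 := by
    have E := eqn (hv - bv) hb_mem x4v (A 4 0) (A 4 1) (A 4 2) (A 4 3) (A 4 4) (A 4 5) hKg4 3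
    simp only [G.lie_apply, gb, phifun, G.add_apply, G.smul_apply, G.sub_apply, G.neg_apply, G.zero_apply] at E
    simp [G.lie_def, gb, phifun, zv, bv, x2v, x3v, x4v, ev, hv, fv, x1v, Pi.single_apply, G.add_apply, G.smul_apply, G.sub_apply, G.neg_apply, G.zero_apply] at E
    first
      | linarith
      | (rcases E with E | E <;> first | linarith | norm_num at E)
  have Z50 : A 5 0 = 0 := by
    have E := eqn (hv - bv) hb_mem ev (A 5 0) (A 5 1) (A 5 2) (A 5 3) (A 5 4) (A 5 5) hKg5 0
    simp only [G.lie_apply, gb, phifun, G.add_apply, G.smul_apply, G.sub_apply, G.neg_apply, G.zero_apply] at E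
    simp [G.lie_def, gb, phifun, zv, bv, x2v, x3v, x4v, ev, hv, fv, x1v, Pi.single_apply, G.add_apply, G.smul_apply, G.sub_apply, G.neg_apply, G.zero_apply] at E
    first
      | linarith
      | (rcases E with E | E <;> first | linarith | norm_num at E)
  have Z51 : A 5 1 = 0 := by
    have E := eqn (hv - bv) hb_mem ev (A 5 0) (A 5 1) (A 5 2) (A 5 3) (A 5 4) (A 5 5) hKg5 1
    simp only [G.lie_apply, gb, phifun, G.add_apply, G.smul_apply, G.sub_apply, G.neg_apply, G.zero_apply] at E
    simp [G.lie_def, gb, phifun, zv, bv, x2v, x3v, x4v, ev, hv, fv, x1v, Pi.single_apply, G.add_apply, G.smul_apply, G.sub_apply, G.neg_apply, G.zero_apply] at E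
    first
      | linarith
      | (rcases E with E | E <;> first | linarith | norm_num at E)
  have Z52 : A 5 2 = 0 := by
    have E := eqn (hv - bv) hb_mem ev (A 5 0) (A 5 1) (A 5 2) (A 5 3) (A 5 4) (A 5 5) hKg5 2
    simp only [G.lie_apply, gb, phifun, G.add_apply, G.smul_apply, G.sub_apply, G.neg_apply, G.zero_apply] at E
    simp [G.lie_def, gb, phifun, zv, bv, x2v, x3v, x4v, ev, hv, fv, x1v, Pi.single_apply, G.add_apply, G.smul_apply, G.sub_apply, G.neg_apply, G.zero_apply] at E
    first
      | linarith
      | (rcases E with E | E <;> first | linarith | norm_num at E)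
  have Z53 : A 5 3 = 0 := by
    have E := eqn (hv - bv) hb_mem ev (A 5 0) (A 5 1) (A 5 2) (A 5 3) (A 5 4) (A 5 5) hKg5 3
    simp only [G.lie_apply, gb, phifun, G.add_apply, G.smul_apply, G.sub_apply, G.neg_apply, G.zero_apply] at E
    simp [G.lie_def, gb, phifun, zv, bv, x2v, x3v, x4v, ev, hv, fv, x1v, Pi.single_apply, G.add_apply, G.smul_apply, G.sub_apply, G.neg_apply, G.zero_apply] at E
    first
      | linarith
      | (rcases E with E | E <;> first | linarith | norm_num at E)
  have R1 := eqn (x1v) x1v_mem x4v (A 4 0) (A 4 1) (A 4 2) (A 4 3) (A 4 4) (A 4 5) hKg4 0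
  simp only [G.lie_apply, gb, phifun, G.add_apply, G.smul_apply, G.sub_apply, G.neg_apply, G.zero_apply] at R1
  simp [G.lie_def, gb, phifun, zv, bv, x2v, x3v, x4v, ev, hv, fv, x1v, Pi.single_apply, G.add_apply, G.smul_apply, G.sub_apply, G.neg_apply, G.zero_apply] at R1
  have R2 := eqn (x1v) x1v_mem x4v (A 4 0) (A 4 1) (A 4 2) (A 4 3) (A 4 4) (A 4 5) hKg4 2
  simp only [G.lie_apply, gb, phifun, G.add_apply, G.smul_apply, G.sub_apply, G.neg_apply, G.zero_apply] at R2
  simp [G.lie_def, gb, phifun, zv, bv, x2v, x3v, x4v, ev, hv, fv, x1v, Pi.single_apply, G.add_apply, G.smul_apply, G.sub_apply, G.neg_apply, G.zero_apply] at R2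
  have R3 := eqn (x1v) x1v_mem ev (A 5 0) (A 5 1) (A 5 2) (A 5 3) (A 5 4) (A 5 5) hKg5 0
  simp only [G.lie_apply, gb, phifun, G.add_apply, G.smul_apply, G.sub_apply, G.neg_apply, G.zero_apply] at R3
  simp [G.lie_def, gb, phifun, zv, bv, x2v, x3v, x4v, ev, hv, fv, x1v, Pi.single_apply, G.add_apply, G.smul_apply, G.sub_apply, G.neg_apply, G.zero_apply] at R3
  have R4 := eqn (x1v) x1v_mem ev (A 5 0) (A 5 1) (A 5 2) (A 5 3) (A 5 4) (A 5 5) hKg5 2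
  simp only [G.lie_apply, gb, phifun, G.add_apply, G.smul_apply, G.sub_apply, G.neg_apply, G.zero_apply] at R4
  simp [G.lie_def, gb, phifun, zv, bv, x2v, x3v, x4v, ev, hv, fv, x1v, Pi.single_apply, G.add_apply, G.smul_apply, G.sub_apply, G.neg_apply, G.zero_apply] at R4
  have R5 := eqn (fv - zv) fz_mem bv (A 1 0) (A 1 1) (A 1 2) (A 1 3) (A 1 4) (A 1 5) hKg1 0
  simp only [G.lie_apply, gb, phifun, G.add_apply, G.smul_apply, G.sub_apply, G.neg_apply, G.zero_apply] at R5
  simp [G.lie_def, gb, phifun, zv, bv, x2v, x3v, x4v, ev, hv, fv, x1v, Pi.single_apply, G.add_apply, G.smul_apply, G.sub_apply, G.neg_apply, G.zero_apply] at R5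
  have R6 := eqn (fv - zv) fz_mem bv (A 1 0) (A 1 1) (A 1 2) (A 1 3) (A 1 4) (A 1 5) hKg1 2
  simp only [G.lie_apply, gb, phifun, G.add_apply, G.smul_apply, G.sub_apply, G.neg_apply, G.zero_apply] at R6
  simp [G.lie_def, gb, phifun, zv, bv, x2v, x3v, x4v, ev, hv, fv, x1v, Pi.single_apply, G.add_apply, G.smul_apply, G.sub_apply, G.neg_apply, G.zero_apply] at R6
  have R7 := eqn (fv - zv) fz_mem x3v (A 3 0) (A 3 1) (A 3 2) (A 3 3) (A 3 4) (A 3 5) hKg3 0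
  simp only [G.lie_apply, gb, phifun, G.add_apply, G.smul_apply, G.sub_apply, G.neg_apply, G.zero_apply] at R7
  simp [G.lie_def, gb, phifun, zv, bv, x2v, x3v, x4v, ev, hv, fv, x1v, Pi.single_apply, G.add_apply, G.smul_apply, G.sub_apply, G.neg_apply, G.zero_apply] at R7
  have R8 := eqn (fv - zv) fz_mem x3v (A 3 0) (A 3 1) (A 3 2) (A 3 3) (A 3 4) (A 3 5) hKg3 2
  simp only [G.lie_apply, gb, phifun, G.add_apply, G.smul_apply, G.sub_apply, G.neg_apply, G.zero_apply] at R8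
  simp [G.lie_def, gb, phifun, zv, bv, x2v, x3v, x4v, ev, hv, fv, x1v, Pi.single_apply, G.add_apply, G.smul_apply, G.sub_apply, G.neg_apply, G.zero_apply] at R8
  have R9 := eqn (fv - zv) fz_mem x4v (A 4 0) (A 4 1) (A 4 2) (A 4 3) (A 4 4) (A 4 5) hKg4 3
  simp only [G.lie_apply, gb, phifun, G.add_apply, G.smul_apply, G.sub_apply, G.neg_apply, G.zero_apply] at R9
  simp [G.lie_def, gb, phifun, zv, bv, x2v, x3v, x4v, ev, hv, fv, x1v, Pi.single_apply, G.add_apply, G.smul_apply, G.sub_apply, G.neg_apply, G.zero_apply] at R9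
  have R10 := eqn (fv - zv) fz_mem x4v (A 4 0) (A 4 1) (A 4 2) (A 4 3) (A 4 4) (A 4 5) hKg4 1
  simp only [G.lie_apply, gb, phifun, G.add_apply, G.smul_apply, G.sub_apply, G.neg_apply, G.zero_apply] at R10
  simp [G.lie_def, gb, phifun, zv, bv, x2v, x3v, x4v, ev, hv, fv, x1v, Pi.single_apply, G.add_apply, G.smul_apply, G.sub_apply, G.neg_apply, G.zero_apply] at R10
  have R11 := eqn (fv - zv) fz_mem ev (A 5 0) (A 5 1) (A 5 2) (A 5 3) (A 5 4) (A 5 5) hKg5 1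
  simp only [G.lie_apply, gb, phifun, G.add_apply, G.smul_apply, G.sub_apply, G.neg_apply, G.zero_apply] at R11
  simp [G.lie_def, gb, phifun, zv, bv, x2v, x3v, x4v, ev, hv, fv, x1v, Pi.single_apply, G.add_apply, G.smul_apply, G.sub_apply, G.neg_apply, G.zero_apply] at R11
  have R12 := eqn (fv - zv) fz_mem ev (A 5 0) (A 5 1) (A 5 2) (A 5 3) (A 5 4) (A 5 5) hKg5 3
  simp only [G.lie_apply, gb, phifun, G.add_apply, G.smul_apply, G.sub_apply, G.neg_apply, G.zero_apply] at R12
  simp [G.lie_def, gb, phifun, zv, bv, x2v, x3v, x4v, ev, hv, fv, x1v, Pi.single_apply, G.add_apply, G.smul_apply, G.sub_apply, G.neg_apply, G.zero_apply] at R12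
  have hKK0 : K (K (pr zv)) = -pr zv := by
    have h := LinearMap.congr_fun hK2 (pr zv)
    simpa using h
  have Q : ∀ t : Fin 6, A 0 0 * A 0 t + A 0 1 * A 1 t + A 0 2 * A 2 t + A 0 3 * A 3 t
      + A 0 4 * A 4 t + A 0 5 * A 5 t = -(phifun zv t) := by
    intro t
    have h2 := congrFun (congrArg cmap hKK0) t
    rw [hKg0] at h2
    simp only [map_add, map_smul, map_neg, Pi.add_apply, Pi.smul_apply, Pi.neg_apply,
      smul_eq_mul, hA0, hA1, hA2, hA3, hA4, hA5, cmap_pr] at h2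
    linear_combination h2
  have Qa := Q 0
  have Qb := Q 2
  simp [phifun, zv, Pi.single_apply] at Qa Qb
  rw [Z01, Z03, Z04, Z05] at Qa Qb
  have hV20 : A 2 0 = -A 0 2 := by linarith
  have hV22 : A 2 2 = A 0 0 := by linarith
  rw [hV20] at Qa
  rw [hV22] at Qb
  have hpr : A 0 0 * A 0 2 = 0 := by linear_combination (1/2 : ℝ) * Qb
  have hp : A 0 0 = 0 := by
    rcases mul_eq_zero.mp hpr with h | h
    · exact h
    · exfalso; rw [h] at Qa; nlinarith [Qa]
  have hr : (A 0 2 - 1) * (A 0 2 + 1) = 0 := by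
    linear_combination -Qa + A 0 0 * hp
  have v11 : A 1 1 = 0 := by linarith
  have v22 : A 2 2 = 0 := by linarith
  have v33 : A 3 3 = 0 := by linarith
  have v44 : A 4 4 = 0 := by linarith
  have v55 : A 5 5 = 0 := by linarith
  rcases mul_eq_zero.mp hr with h | h
  · -- A 0 2 = 1, K = J
    have h02 : A 0 2 = 1 := by linarith
    have v20 : A 2 0 = -1 := by linarith
    have v13 : A 1 3 = -1 := by linarith
    have v31 : A 3 1 = 1 := by linarith
    have v45 : A 4 5 = -1 := by linarith
    have v54 : A 5 4 = 1 := by linarith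
    refine Or.inl (ext6 ?_ ?_ ?_ ?_ ?_ ?_)
    · rw [hKg0, hJ0, hp, Z01, h02, Z03, Z04, Z05]; simp
    · rw [hKg1, hJ1, Z10, v11, Z12, v13, Z14, Z15]; simp
    · rw [hKg2, hJ2, v20, Z21, v22, Z23, Z24, Z25]; simp
    · rw [hKg3, hJ3, Z30, v31, Z32, v33, Z34, Z35]; simp
    · rw [hKg4, hJ4, Z40, Z41, Z42, Z43, v44, v45]; simp
    · rw [hKg5, hJ5, Z50, Z51, Z52, Z53, v54, v55]; simp
  · -- A 0 2 = -1, K = -J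
    have h02 : A 0 2 = -1 := by linarith
    have v20 : A 2 0 = 1 := by linarith
    have v13 : A 1 3 = 1 := by linarith
    have v31 : A 3 1 = -1 := by linarith
    have v45 : A 4 5 = 1 := by linarith
    have v54 : A 5 4 = -1 := by linarith
    refine Or.inr (ext6 ?_ ?_ ?_ ?_ ?_ ?_)
    · rw [hKg0, hp, Z01, h02, Z03, Z04, Z05]; simp [LinearMap.neg_apply, hJ0]
    · rw [hKg1, Z10, v11, Z12, v13, Z14, Z15]; simp [LinearMap.neg_apply, hJ1]
    · rw [hKg2, v20, Z21, v22, Z23, Z24, Z25]; simp [LinearMap.neg_apply, hJ2]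
    · rw [hKg3, Z30, v31, Z32, v33, Z34, Z35]; simp [LinearMap.neg_apply, hJ3]
    · rw [hKg4, Z40, Z41, Z42, Z43, v44, v45]; simp [LinearMap.neg_apply, hJ4]
    · rw [hKg5, Z50, Z51, Z52, Z53, v54, v55]; simp [LinearMap.neg_apply, hJ5]
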